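/- For every integer a ≥ 2, the minimal system of generators of S(a) has exactly a + 1 elements; that is, the embedding dimension of S(a) is a + 1. -/

import Mathlib

/-- The Lucas sequence: l 0 = 2, l 1 = 1, l (n+2) = l (n+1) + l n. -/
def lucas : ℕ → ℕ
  | 0 => 2
  | 1 => 1
  | n + 2 => lucas (n + 1) + lucas n

/-- The modified (monotone) Lucas sequence: l̃ 0 = 1, l̃ 1 = 2, l̃ n = l n for n ≥ 2. -/
def ltil : ℕ → ℕ
  | 0 => 1
  | 1 => 2
  | n + 2 => lucas (n + 2)

/-- β x : minimal number of summands in a representation of x as a sum of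
modified Lucas numbers (with repetitions allowed). -/
noncomputable def beta (x : ℕ) : ℕ :=
  sInf {s : ℕ | ∃ k : ℕ, ∃ b : ℕ → ℕ,
    x = ∑ i ∈ Finset.range (k + 1), b i * ltil i ∧ s = ∑ i ∈ Finset.range (k + 1), b i}

/-- γ x : the greatest k with l̃ k ≤ x (for x ≥ 1). -/
noncomputable def gamma (x : ℕ) : ℕ := sSup {k : ℕ | ltil k ≤ x}

/-- S a : the additive submonoid of ℕ generated by {l_a} ∪ {l_a + l_n : n ∈ ℕ}. -/
def Sset (a : ℕ) : AddSubmonoid ℕ :=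
  AddSubmonoid.closure ({lucas a} ∪ {x : ℕ | ∃ n : ℕ, x = lucas a + lucas n})

/-- T a : the additive submonoid of ℕ generated by {l_a + l_n : n ∈ ℕ}. -/
def Tset (a : ℕ) : AddSubmonoid ℕ :=
  AddSubmonoid.closure {x : ℕ | ∃ n : ℕ, x = lucas a + lucas n}

lemma lucas_pos : ∀ n, 1 ≤ lucas n
  | 0 => by simp [lucas]
  | 1 => by simp [lucas]
  | n + 2 => by
      have := lucas_pos (n + 1)
      simp only [lucas]; omega

lemma lucas_succ_lt : ∀ n, 1 ≤ n → lucas n < lucas (n + 1)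
  | 1, _ => by norm_num [lucas]
  | n + 2, _ => by
      have h1 := lucas_pos (n + 1)
      show lucas (n + 2) < lucas (n + 1 + 2)
      simp only [lucas]; omega

lemma lucas_lt_of_lt {m n : ℕ} (hm : 1 ≤ m) (h : m < n) : lucas m < lucas n := by
  induction n with
  | zero => omega
  | succ k ih =>
    rcases Nat.lt_succ_iff_lt_or_eq.mp h with h' | h'
    · exact (ih h').trans (lucas_succ_lt k (by omega))
    · subst h'; exact lucas_succ_lt m hm

lemma lucas_lt_lucas_a {n a : ℕ} (ha : 2 ≤ a) (h : n < a) : lucas n < lucas a := by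
  match n with
  | 0 =>
    have : lucas 2 ≤ lucas a := by
      rcases eq_or_lt_of_le ha with h' | h'
      · rw [h']
      · exact le_of_lt (lucas_lt_of_lt (by omega) h')
    simp only [lucas] at *; omega
  | n + 1 => exact lucas_lt_of_lt (by omega) h

lemma lucas_inj {m n : ℕ} (h : lucas m = lucas n) : m = n := by
  by_contra hne
  rcases Nat.lt_or_ge m n with hlt | hge
  · match m with
    | 0 =>
      match n with
      | 1 => simp [lucas] at h
      | n + 2 =>
        have := lucas_lt_of_lt (m := 2) (by omega) (by omega : (2:ℕ) < n + 3)
        have h3 : lucas 2 ≤ lucas (n+2) := by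
          rcases Nat.lt_or_ge 2 (n+2) with h' | h'
          · exact le_of_lt (lucas_lt_of_lt (by omega) h')
          · have : n = 0 := by omega
            subst this; rfl
        simp only [lucas] at h h3; omega
    | m + 1 => exact absurd h (Nat.ne_of_lt (lucas_lt_of_lt (by omega) hlt))
  · have hlt : n < m := by omega
    match n with
    | 0 =>
      match m with
      | 1 => simp [lucas] at h
      | m + 2 =>
        have h3 : lucas 2 ≤ lucas (m+2) := by
          rcases Nat.lt_or_ge 2 (m+2) with h' | h'
          · exact le_of_lt (lucas_lt_of_lt (by omega) h')
          · have : m = 0 := by omega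
            subst this; rfl
        simp only [lucas] at h h3; omega
    | n + 1 => exact absurd h.symm (Nat.ne_of_lt (lucas_lt_of_lt (by omega) hlt))

/-- canonical minimal generating set -/
def Xgen (a : ℕ) : Finset ℕ :=
  insert (lucas a) ((Finset.range a).image (fun n => lucas a + lucas n))

lemma Xgen_ge {a x : ℕ} (hx : x ∈ Xgen a) : lucas a ≤ x := by
  simp only [Xgen, Finset.mem_insert, Finset.mem_image, Finset.mem_range] at hx
  rcases hx with rfl | ⟨n, _, rfl⟩
  · exact le_rfl
  · exact Nat.le_add_right _ _

lemma Xgen_lt {a x : ℕ} (ha : 2 ≤ a) (hx : x ∈ Xgen a) : x < 2 * lucas a := by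
  simp only [Xgen, Finset.mem_insert, Finset.mem_image, Finset.mem_range] at hx
  have h1 := lucas_pos a
  rcases hx with rfl | ⟨n, hn, rfl⟩
  · omega
  · have := lucas_lt_lucas_a ha hn; omega

lemma Xgen_card {a : ℕ} (ha : 2 ≤ a) : (Xgen a).card = a + 1 := by
  rw [Xgen, Finset.card_insert_of_notMem, Finset.card_image_of_injOn, Finset.card_range]
  · intro m hm n hn h
    simp only at h
    exact lucas_inj (by omega)
  · simp only [Finset.mem_image, Finset.mem_range, not_exists]
    rintro n ⟨hn, h⟩
    have := lucas_pos n
    omega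

lemma lucas_mem_closure (a : ℕ) (ha : 2 ≤ a) :
    ∀ m, lucas (a + m) ∈ AddSubmonoid.closure ((Xgen a : Set ℕ))
  | 0 => AddSubmonoid.subset_closure (by simp [Xgen])
  | 1 => by
      obtain ⟨b, rfl⟩ : ∃ b, a = b + 2 := ⟨a - 2, by omega⟩
      apply AddSubmonoid.subset_closure
      have : lucas (b + 2 + 1) = lucas (b + 2) + lucas (b + 1) := rfl
      rw [this]
      simp only [Xgen, Finset.coe_insert, Finset.coe_image, Finset.coe_range,
        Set.mem_insert_iff, Set.mem_image, Set.mem_Iio]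
      exact Or.inr ⟨b + 1, by omega, rfl⟩
  | m + 2 => by
      have h1 := lucas_mem_closure a ha (m + 1)
      have h2 := lucas_mem_closure a ha m
      have : lucas (a + (m + 2)) = lucas (a + m + 1) + lucas (a + m) := by
        show lucas (a + m + 2) = _
        rfl
      rw [this]
      exact AddSubmonoid.add_mem _ h1 h2

lemma closure_Xgen (a : ℕ) (ha : 2 ≤ a) :
    AddSubmonoid.closure ((Xgen a : Set ℕ)) = Sset a := by
  apply le_antisymm
  · apply AddSubmonoid.closure_le.mpr
    intro x hx
    simp only [Xgen, Finset.coe_insert, Finset.coe_image, Finset.coe_range,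
      Set.mem_insert_iff, Set.mem_image, Set.mem_Iio] at hx
    apply AddSubmonoid.subset_closure
    rcases hx with rfl | ⟨n, _, rfl⟩
    · exact Or.inl rfl
    · exact Or.inr ⟨n, rfl⟩
  · apply AddSubmonoid.closure_le.mpr
    rintro x (rfl | ⟨n, rfl⟩)
    · exact AddSubmonoid.subset_closure (by simp [Xgen])
    · rcases Nat.lt_or_ge n a with h | h
      · exact AddSubmonoid.subset_closure (by
          simp only [Xgen, Finset.coe_insert, Finset.coe_image, Finset.coe_range,
            Set.mem_insert_iff, Set.mem_image, Set.mem_Iio]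
          exact Or.inr ⟨n, h, rfl⟩)
      · obtain ⟨m, rfl⟩ : ∃ m, n = a + m := ⟨n - a, by omega⟩
        exact AddSubmonoid.add_mem _
          (AddSubmonoid.subset_closure (by simp [Xgen]))
          (lucas_mem_closure a ha m)

lemma mem_closure_small {Z : Set ℕ} {c x : ℕ} (hc : ∀ z ∈ Z, c ≤ z)
    (hx : x ∈ AddSubmonoid.closure Z) : x = 0 ∨ x ∈ Z ∨ 2 * c ≤ x := by
  induction hx using AddSubmonoid.closure_induction with
  | mem z hz => exact Or.inr (Or.inl hz)
  | zero => exact Or.inl rfl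
  | add x y hx hy ihx ihy =>
    have hx' : x = 0 ∨ c ≤ x := by
      rcases ihx with h | h | h
      · exact Or.inl h
      · exact Or.inr (hc _ h)
      · right; omega
    have hy' : y = 0 ∨ c ≤ y := by
      rcases ihy with h | h | h
      · exact Or.inl h
      · exact Or.inr (hc _ h)
      · right; omega
    rcases hx' with rfl | hx'
    · simpa using ihy
    rcases hy' with rfl | hy'
    · simpa using ihx
    · right; right; omega

lemma Sset_ge {a : ℕ} {s : ℕ} (hs : s ∈ Sset a) : s = 0 ∨ lucas a ≤ s := by
  have := mem_closure_small (Z := {lucas a} ∪ {x : ℕ | ∃ n : ℕ, x = lucas a + lucas n})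
    (c := lucas a) ?_ hs
  · rcases this with h | h | h
    · exact Or.inl h
    · rcases h with rfl | ⟨n, rfl⟩
      · exact Or.inr le_rfl
      · exact Or.inr (by omega)
    · have := lucas_pos a; right; omega
  · rintro z (rfl | ⟨n, rfl⟩)
    · exact le_rfl
    · omega

theorem embedding_dimension_S (a : ℕ) (ha : 2 ≤ a) :
    (∃ X : Finset ℕ, AddSubmonoid.closure (X : Set ℕ) = Sset a ∧
      (∀ Y : Finset ℕ, Y ⊂ X → AddSubmonoid.closure (Y : Set ℕ) ≠ Sset a) ∧
      X.card = a + 1) ∧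
    ∀ X : Finset ℕ, AddSubmonoid.closure (X : Set ℕ) = Sset a →
      (∀ Y : Finset ℕ, Y ⊂ X → AddSubmonoid.closure (Y : Set ℕ) ≠ Sset a) →
      X.card = a + 1 := by
  have hpos := lucas_pos a
  constructor
  · refine ⟨Xgen a, closure_Xgen a ha, ?_, Xgen_card ha⟩
    intro Y hY hYS
    obtain ⟨x, hxX, hxY⟩ := Finset.exists_of_ssubset hY
    have hxS : x ∈ Sset a := by
      rw [← closure_Xgen a ha]
      exact AddSubmonoid.subset_closure hxX
    rw [← hYS] at hxS
    have hYsub : (Y : Set ℕ) ⊆ (((Xgen a).erase x : Finset ℕ) : Set ℕ) := by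
      intro z hz
      simp only [Finset.mem_coe, Finset.mem_erase] at hz ⊢
      exact ⟨fun h => hxY (h ▸ hz), hY.1 hz⟩
    have hx' : x ∈ AddSubmonoid.closure (((Xgen a).erase x : Finset ℕ) : Set ℕ) :=
      AddSubmonoid.closure_mono hYsub hxS
    have hc : ∀ z ∈ (((Xgen a).erase x : Finset ℕ) : Set ℕ), lucas a ≤ z := by
      intro z hz
      simp only [Finset.mem_coe, Finset.mem_erase] at hz
      exact Xgen_ge hz.2
    rcases mem_closure_small hc hx' with h | h | h
    · have := Xgen_ge hxX; omega
    · simp only [Finset.mem_coe, Finset.mem_erase] at h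
      exact h.1 rfl
    · exact absurd h (not_le.mpr (Xgen_lt ha hxX))
  · intro X' hclX' hminX'
    have h0 : (0 : ℕ) ∉ X' := by
      intro h0
      apply hminX' (X'.erase 0) (Finset.erase_ssubset h0)
      apply le_antisymm
      · calc AddSubmonoid.closure ((X'.erase 0 : Finset ℕ) : Set ℕ)
            ≤ AddSubmonoid.closure (X' : Set ℕ) :=
              AddSubmonoid.closure_mono (Finset.coe_subset.mpr (Finset.erase_subset _ _))
          _ = Sset a := hclX'
      · rw [← hclX']
        apply AddSubmonoid.closure_le.mpr
        intro z hz
        simp only [Finset.mem_coe] at hz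
        by_cases hz0 : z = 0
        · subst hz0; exact zero_mem _
        · exact AddSubmonoid.subset_closure
            (by simp only [Finset.coe_erase, Set.mem_diff, Finset.mem_coe,
              Set.mem_singleton_iff]; exact ⟨hz, hz0⟩)
    have hge : ∀ z ∈ (X' : Set ℕ), lucas a ≤ z := by
      intro z hz
      have hzS : z ∈ Sset a := by
        rw [← hclX']; exact AddSubmonoid.subset_closure hz
      rcases Sset_ge hzS with rfl | h
      · exact absurd hz (by simpa using h0)
      · exact h
    have hXsub : Xgen a ⊆ X' := by
      intro g hg
      have hgS : g ∈ Sset a := by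
        rw [← closure_Xgen a ha]
        exact AddSubmonoid.subset_closure hg
      rw [← hclX'] at hgS
      rcases mem_closure_small hge hgS with h | h | h
      · have := Xgen_ge hg; omega
      · exact h
      · exact absurd h (not_le.mpr (Xgen_lt ha hg))
    have hsub2 : X' ⊆ Xgen a := by
      intro y hy
      by_contra hyX
      apply hminX' (X'.erase y) (Finset.erase_ssubset hy)
      apply le_antisymm
      · calc AddSubmonoid.closure ((X'.erase y : Finset ℕ) : Set ℕ)
            ≤ AddSubmonoid.closure (X' : Set ℕ) :=
              AddSubmonoid.closure_mono (Finset.coe_subset.mpr (Finset.erase_subset _ _))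
          _ = Sset a := hclX'
      · rw [← closure_Xgen a ha]
        apply AddSubmonoid.closure_mono
        intro g hg
        simp only [Finset.mem_coe, Finset.mem_erase] at hg ⊢
        exact ⟨fun h => hyX (h ▸ hg), hXsub hg⟩
    rw [Finset.Subset.antisymm hsub2 hXsub, Xgen_card ha]
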